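/- Let m be a positive integer and set m̲ = ∏_{q^j ∥ m} q^{⌈j/2⌉}. Define C^{D(m)} = (1/φ(m̲)) ∑_{1 ≤ r ≤ m̲, gcd(r,m̲)=1} ω_r(m). Then C^{D(m)} ≥ 1/m. -/

import Mathlib

/-- The value of the multiplicative function `ω_r` at a prime power `q ^ j`. -/
noncomputable def omegaPP (r q j : ℕ) : ℝ :=
  if r % q ^ ((j + 1) / 2) = 1 % q ^ ((j + 1) / 2) then
    ((q : ℝ) ^ (j / 2 + 1) + (q : ℝ) ^ (j / 2) - 1) /
      ((q : ℝ) ^ (j + j / 2 - 1) * ((q : ℝ) ^ 2 - 1))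
  else
    1 / ((q : ℝ) ^ (j - 1) * ((q : ℝ) - 1))

/-- The multiplicative function `ω_r`, with `ω_r(m) = ∏_{q^j ∥ m} ω_r(q^j)`. -/
noncomputable def omegaFn (r m : ℕ) : ℝ :=
  ∏ q ∈ m.primeFactors, omegaPP r q (m.factorization q)

/-- `m̲ = ∏_{q^j ∥ m} q^⌈j/2⌉`. -/
def mbar (m : ℕ) : ℕ :=
  ∏ q ∈ m.primeFactors, q ^ ((m.factorization q + 1) / 2)

lemma omegaPP_ge (r q j : ℕ) (hq : q.Prime) (hj : 1 ≤ j) :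
    1 / (q : ℝ) ^ j ≤ omegaPP r q j := by
  have hq2 : (2 : ℝ) ≤ (q : ℝ) := by exact_mod_cast hq.two_le
  have hq1 : (1 : ℝ) < (q : ℝ) := by linarith
  have hq0 : (0 : ℝ) < (q : ℝ) := by linarith
  unfold omegaPP
  split_ifs with h
  · -- special case
    set b := j / 2 with hb
    have hbj : b ≤ j := Nat.div_le_self _ _
    have hden : (0 : ℝ) < (q : ℝ) ^ (j + b - 1) * ((q : ℝ) ^ 2 - 1) := by
      have h2 : (1:ℝ) < (q:ℝ)^2 := by nlinarith
      have := pow_pos hq0 (j + b - 1)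
      nlinarith
    rw [div_le_div_iff₀ (by positivity) hden]
    have hexp : j + b - 1 + 1 = j + b := by omega
    have h1 : (q : ℝ) ^ (j + b - 1) * ((q : ℝ) ^ 2 - 1)
        = (q : ℝ) ^ (j + b + 1) - (q : ℝ) ^ (j + b - 1) := by
      have e1 : j + b - 1 + 2 = j + b + 1 := by omega
      rw [mul_sub, mul_one, ← pow_add, e1]
    rw [h1]
    have h2 : (q : ℝ) ^ (b + 1) * (q:ℝ)^j = (q : ℝ) ^ (j + b + 1) := by
      rw [← pow_add]; ring_nf
    have h3 : (q : ℝ) ^ b * (q:ℝ)^j = (q : ℝ) ^ (j + b) := by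
      rw [← pow_add]; ring_nf
    have h4 : (q : ℝ) ^ j ≤ (q : ℝ) ^ (j + b) := by
      exact pow_le_pow_right₀ (by linarith) (by omega)
    have h5 : (0:ℝ) < (q : ℝ) ^ (j + b - 1) := by positivity
    have h6 : (q : ℝ) ^ (j + b - 1) ≤ (q : ℝ) ^ (j + b) := by
      exact pow_le_pow_right₀ (by linarith) (by omega)
    nlinarith [pow_pos hq0 j, pow_pos hq0 (j+b)]
  · -- generic case
    have hden : (0 : ℝ) < (q : ℝ) ^ (j - 1) * ((q : ℝ) - 1) := by
      have : (0:ℝ) < (q:ℝ) - 1 := by linarith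
      positivity
    rw [div_le_div_iff₀ (by positivity) hden, one_mul, one_mul]
    have : (q : ℝ) ^ (j - 1) * ((q : ℝ) - 1) = (q:ℝ)^j - (q:ℝ)^(j-1) := by
      have e1 : j - 1 + 1 = j := by omega
      rw [mul_sub, mul_one, ← pow_succ, e1]
    rw [this]
    have : (0:ℝ) < (q : ℝ) ^ (j - 1) := by positivity
    linarith

lemma omegaPP_nonneg (r q j : ℕ) (hq : q.Prime) (hj : 1 ≤ j) :
    0 ≤ omegaPP r q j :=
  le_trans (by positivity) (omegaPP_ge r q j hq hj)

lemma omegaFn_ge (r m : ℕ) (hm : 0 < m) : 1 / (m : ℝ) ≤ omegaFn r m := by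
  have h1 : ∏ q ∈ m.primeFactors, (1 / (q : ℝ) ^ (m.factorization q)) = 1 / m := by
    rw [Finset.prod_div_distrib, Finset.prod_const_one]
    congr 1
    exact_mod_cast congrArg (Nat.cast (R := ℝ)) (Nat.factorization_prod_pow_eq_self hm.ne')
  rw [← h1, omegaFn]
  apply Finset.prod_le_prod
  · intro q hq
    positivity
  · intro q hq
    exact omegaPP_ge r q _ (Nat.prime_of_mem_primeFactors hq)
      ((Nat.Prime.factorization_pos_of_dvd (Nat.prime_of_mem_primeFactors hq) hm.ne'
        (Nat.dvd_of_mem_primeFactors hq)))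

lemma card_Icc_coprime (n : ℕ) (hn : 0 < n) :
    ((Finset.Icc 1 n).filter (fun r => r.Coprime n)).card = Nat.totient n := by
  rcases eq_or_lt_of_le (show 1 ≤ n from hn) with h | h
  · rw [← h]; decide
  · -- n ≥ 2
    rw [Nat.totient_eq_card_coprime]
    congr 1
    rw [Finset.range_eq_Ico]
    have e1 : Finset.Icc 1 n = Finset.Ico 1 (n + 1) := rfl
    rw [e1]
    ext r
    simp only [Finset.mem_filter, Finset.mem_Ico]
    constructor
    · rintro ⟨⟨h1, h2⟩, hcop⟩
      have hrn : r ≠ n := by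
        rintro rfl
        rw [Nat.Coprime, Nat.gcd_self] at hcop
        omega
      exact ⟨by omega, hcop.symm⟩
    · rintro ⟨h1, hcop⟩
      have hr0 : r ≠ 0 := by
        rintro rfl
        rw [Nat.Coprime, Nat.gcd_zero_right] at hcop
        omega
      exact ⟨⟨by omega, by omega⟩, hcop.symm⟩

theorem stmt2 (m : ℕ) (hm : 0 < m) :
    (1 : ℝ) / (m : ℝ) ≤
      (1 / (Nat.totient (mbar m) : ℝ)) *
        ∑ r ∈ (Finset.Icc 1 (mbar m)).filter (fun r => r.Coprime (mbar m)), omegaFn r m := by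
  have hmb : 0 < mbar m := by
    apply Finset.prod_pos
    intro q hq
    exact pow_pos (Nat.prime_of_mem_primeFactors hq).pos _
  have htot : 0 < Nat.totient (mbar m) := Nat.totient_pos.mpr hmb
  have hcard := card_Icc_coprime (mbar m) hmb
  set S := (Finset.Icc 1 (mbar m)).filter (fun r => r.Coprime (mbar m)) with hS
  have hsum : (S.card : ℝ) * (1 / m) ≤ ∑ r ∈ S, omegaFn r m := by
    calc (S.card : ℝ) * (1 / m) = ∑ _r ∈ S, (1 / (m:ℝ)) := by
          rw [Finset.sum_const, nsmul_eq_mul]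
      _ ≤ ∑ r ∈ S, omegaFn r m :=
          Finset.sum_le_sum fun r _ => omegaFn_ge r m hm
  rw [hcard] at hsum
  have htotR : (0:ℝ) < (Nat.totient (mbar m) : ℝ) := by exact_mod_cast htot
  rw [one_div, div_mul_eq_mul_div, one_mul, le_div_iff₀ htotR, mul_comm]
  rw [one_div] at hsum
  exact hsum
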